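/- There exist 11 pointwise orthonormal tangent vector fields on the sphere S^63; that is, there exist continuous maps V_1, …, V_11 from the unit sphere S^63 of EuclideanSpace ℝ (Fin 64) to EuclideanSpace ℝ (Fin 64) such that for every p ∈ S^63 and all i, j ∈ {1, …, 11}: ⟨V_i(p), p⟩ = 0, and ⟨V_i(p), V_j(p)⟩ = 1 if i = j and 0 if i ≠ j. -/

import Mathlib

open scoped RealInnerProductSpace

namespace S63Fields

/-- flip masks -/
def cm : Fin 11 → ℕ := ![1, 3, 6, 2, 4, 7, 13, 5, 29, 61, 45]
/-- sign masks -/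
def dm : Fin 11 → ℕ := ![1, 2, 3, 7, 5, 4, 6, 14, 30, 46, 62]

/-- parity of the low 6 bits -/
def par6 (x : ℕ) : Bool :=
  (x.testBit 0).xor ((x.testBit 1).xor ((x.testBit 2).xor
    ((x.testBit 3).xor ((x.testBit 4).xor (x.testBit 5)))))

def P (i : Fin 11) (m : Fin 64) : Fin 64 :=
  ⟨(m.val ^^^ cm i) % 64, Nat.mod_lt _ (by norm_num)⟩

def sb (i : Fin 11) (m : Fin 64) : Bool := par6 (m.val &&& dm i)

noncomputable def S (i : Fin 11) (m : Fin 64) : ℝ := if sb i m then 1 else -1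

set_option maxHeartbeats 2000000 in
lemma L1 : ∀ i m, P i (P i m) = m := by decide
set_option maxHeartbeats 2000000 in
lemma L2 : ∀ i m, sb i (P i m) = ! sb i m := by decide
set_option maxHeartbeats 2000000 in
lemma L3 : ∀ i j m, P j (P i (P j m)) = P i m := by decide
set_option maxHeartbeats 4000000 in
lemma L4 : ∀ i j, i ≠ j → ∀ m,
    xor (sb i (P i (P j m))) (sb j (P i (P j m))) = !(xor (sb i m) (sb j m)) := by decide

lemma S_sq (i : Fin 11) (m : Fin 64) : S i m * S i m = 1 := by
  unfold S; split <;> norm_num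

lemma S_P_self (i : Fin 11) (m : Fin 64) : S i (P i m) = - S i m := by
  unfold S; rw [L2]; cases sb i m <;> simp

lemma S_pair (i j : Fin 11) (h : i ≠ j) (m : Fin 64) :
    S i (P i (P j m)) * S j (P i (P j m)) = -(S i m * S j m) := by
  have h4 := L4 i j h m
  unfold S
  rcases hb1 : sb i (P i (P j m)) <;> rcases hb2 : sb j (P i (P j m)) <;>
    rcases hb3 : sb i m <;> rcases hb4 : sb j m <;>
    simp [hb1, hb2, hb3, hb4] at h4 ⊢ <;> norm_num

/-- the permutation as an equiv -/
def Pe (i : Fin 11) : Equiv.Perm (Fin 64) := ⟨P i, P i, fun m => L1 i m, fun m => L1 i m⟩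

noncomputable def Vf (i : Fin 11) (p : EuclideanSpace ℝ (Fin 64)) :
    EuclideanSpace ℝ (Fin 64) := WithLp.toLp 2 (fun m => S i m * p (P i m))

lemma sum_neg_self {t : Fin 64 → ℝ} (e : Equiv.Perm (Fin 64))
    (h : ∀ m, t (e m) = - t m) : ∑ m, t m = 0 := by
  have h1 : ∑ m, t m = ∑ m, t (e m) := (Equiv.sum_comp e t).symm
  have h2 : ∑ m, t (e m) = - ∑ m, t m := by
    rw [← Finset.sum_neg_distrib]; exact Finset.sum_congr rfl fun m _ => h m
  linarith [h1, h2]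

lemma tangent (i : Fin 11) (p : EuclideanSpace ℝ (Fin 64)) :
    ∑ m, S i m * p (P i m) * p m = 0 := by
  refine sum_neg_self (Pe i) fun m => ?_
  show S i (P i m) * p (P i (P i m)) * p (P i m) = _
  rw [L1, S_P_self]; ring

lemma offdiag (i j : Fin 11) (h : i ≠ j) (p : EuclideanSpace ℝ (Fin 64)) :
    ∑ m, (S i m * p (P i m)) * (S j m * p (P j m)) = 0 := by
  refine sum_neg_self ((Pe j).trans (Pe i)) fun m => ?_
  show (S i (P i (P j m)) * p (P i (P i (P j m)))) *
       (S j (P i (P j m)) * p (P j (P i (P j m)))) = _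
  rw [L1, L3]
  have hS := S_pair i j h m
  linear_combination p (P j m) * p (P i m) * hS

end S63Fields

open S63Fields in
/-- There exist 11 pointwise orthonormal tangent vector fields on the
sphere `S^63`: continuous maps `V i` from the unit sphere of `EuclideanSpace ℝ (Fin 64)`
to `EuclideanSpace ℝ (Fin 64)` with `⟪V i p, p⟫ = 0` and `⟪V i p, V j p⟫ = δᵢⱼ`
at every point `p` of the sphere. -/
theorem exists_eleven_orthonormal_tangent_fields_on_S63 :
    ∃ V : Fin 11 →
        (Metric.sphere (0 : EuclideanSpace ℝ (Fin 64)) 1 → EuclideanSpace ℝ (Fin 64)),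
      (∀ i, Continuous (V i)) ∧
      (∀ i, ∀ p : Metric.sphere (0 : EuclideanSpace ℝ (Fin 64)) 1,
        ⟪V i p, (p : EuclideanSpace ℝ (Fin 64))⟫ = 0) ∧
      (∀ i j, ∀ p : Metric.sphere (0 : EuclideanSpace ℝ (Fin 64)) 1,
        ⟪V i p, V j p⟫ = if i = j then 1 else 0) := by
  refine ⟨fun i p => Vf i (p : EuclideanSpace ℝ (Fin 64)), ?_, ?_, ?_⟩
  · intro i
    have hc : Continuous fun p : Metric.sphere (0 : EuclideanSpace ℝ (Fin 64)) 1 =>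
        (fun m => S i m * (p : EuclideanSpace ℝ (Fin 64)) (P i m) : ∀ _ : Fin 64, ℝ) := by
      refine continuous_pi fun m => continuous_const.mul ?_
      exact (continuous_apply (P i m)).comp
        ((PiLp.continuousLinearEquiv 2 ℝ (fun _ : Fin 64 => ℝ)).continuous.comp
          continuous_subtype_val)
    exact (PiLp.continuous_toLp 2 (fun _ : Fin 64 => ℝ)).comp hc
  · intro i p
    simp only [PiLp.inner_apply, RCLike.inner_apply, conj_trivial]
    refine (Finset.sum_congr rfl fun m _ => ?_).trans (tangent i p)
    show _ * (S i m * _) = _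
    ring
  · intro i j p
    simp only [PiLp.inner_apply, RCLike.inner_apply, conj_trivial]
    by_cases h : i = j
    · subst h
      simp only [if_pos rfl]
      have hsq : ∀ m, Vf i (p : EuclideanSpace ℝ (Fin 64)) m *
          Vf i (p : EuclideanSpace ℝ (Fin 64)) m =
          (p : EuclideanSpace ℝ (Fin 64)) (P i m) * (p : EuclideanSpace ℝ (Fin 64)) (P i m) := by
        intro m
        show (S i m * _) * (S i m * _) = _
        have hS := S_sq i m
        linear_combination ((p : EuclideanSpace ℝ (Fin 64)) (P i m) *
          (p : EuclideanSpace ℝ (Fin 64)) (P i m)) * hS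
      rw [Finset.sum_congr rfl fun m _ => hsq m]
      have hre : ∑ m, (p : EuclideanSpace ℝ (Fin 64)) (P i m) *
          (p : EuclideanSpace ℝ (Fin 64)) (P i m) =
          ∑ k, (p : EuclideanSpace ℝ (Fin 64)) k * (p : EuclideanSpace ℝ (Fin 64)) k :=
        Equiv.sum_comp (Pe i) (fun k => (p : EuclideanSpace ℝ (Fin 64)) k *
          (p : EuclideanSpace ℝ (Fin 64)) k)
      rw [hre, if_true]
      have hnorm : ‖(p : EuclideanSpace ℝ (Fin 64))‖ = 1 := by
        have := p.2; simpa [dist_eq_norm] using this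
      have : ⟪(p : EuclideanSpace ℝ (Fin 64)), (p : EuclideanSpace ℝ (Fin 64))⟫ = 1 := by
        rw [real_inner_self_eq_norm_sq, hnorm]; norm_num
      rw [PiLp.inner_apply] at this
      simpa only [RCLike.inner_apply, conj_trivial] using this
    · simp only [if_neg h]
      refine (Finset.sum_congr rfl fun m _ => ?_).trans (offdiag i j h p)
      show (S j m * _) * (S i m * _) = _
      ring
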